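/- arXiv:2511.16479 — 4 statements merged into one kernel-verified Lean document; each statement's English description precedes it below -/
import Mathlib

section
/- Let $f : \mathbb{N} \to \mathbb{N}$ and let $\ell \ge 1$. There exists a constant $B = B(\ell, f)$ such that every finite solvable group $G$ of derived length at most $\ell$ satisfying $ab_k(G) \le f(k)$ for all $k \ge 1$ has order $|G| \le B$. -/
/-- The abelianization growth function: `ab_k(G)` is the largest index `|H : H'|`
over subgroups `H ≤ G` of index at most `k`. -/
noncomputable def abGrowth (G : Type*) [Group G] (k : ℕ) : ℕ :=
  sSup {n | ∃ H : Subgroup G, H.index ≤ k ∧ n = Nat.card (Abelianization H)}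

section Aux

variable {G : Type*} [Group G] [Finite G]

lemma card_abelianization_eq_index (H : Subgroup G) :
    Nat.card (Abelianization H) = (commutator H).index := rfl

lemma abGrowth_bddAbove (k : ℕ) :
    BddAbove {n | ∃ H : Subgroup G, H.index ≤ k ∧ n = Nat.card (Abelianization H)} := by
  refine ⟨Nat.card G, ?_⟩
  rintro n ⟨H, -, rfl⟩
  rw [card_abelianization_eq_index]
  calc (commutator ↥H).index ≤ Nat.card ↥H :=
        Nat.le_of_dvd Nat.card_pos (Subgroup.index_dvd_card _)
    _ ≤ Nat.card G := Nat.card_le_card_of_injective _ H.subtype_injective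

lemma le_abGrowth {k : ℕ} {H : Subgroup G} (hH : H.index ≤ k) :
    Nat.card (Abelianization H) ≤ abGrowth G k :=
  le_csSup (abGrowth_bddAbove k) ⟨H, hH, rfl⟩

lemma abGrowth_quotient (N : Subgroup G) [N.Normal] (k : ℕ) :
    abGrowth (G ⧸ N) k ≤ abGrowth G k := by
  refine csSup_le' ?_
  rintro n ⟨K, hK, rfl⟩
  set H := K.comap (QuotientGroup.mk' N) with hH
  have hsurj : Function.Surjective (QuotientGroup.mk' N) := QuotientGroup.mk'_surjective N
  have hidx : H.index = K.index := K.index_comap_of_surjective hsurj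
  let φ : ↥H →* ↥K := ((QuotientGroup.mk' N).domRestrict H).codRestrict K (fun x => x.2)
  have hφ : Function.Surjective φ := by
    rintro ⟨x, hx⟩
    obtain ⟨g, rfl⟩ := hsurj x
    exact ⟨⟨g, hx⟩, rfl⟩
  have hof : Function.Surjective (Abelianization.of (G := ↥H)) :=
    fun y => Quotient.inductionOn' y (fun g => ⟨g, rfl⟩)
  have hab : Function.Surjective (Abelianization.map φ) := by
    intro y
    refine Quotient.inductionOn' y (fun g => ?_)
    obtain ⟨h, hh⟩ := hφ g
    exact ⟨Abelianization.of h, by rw [Abelianization.map_of, hh]; rfl⟩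
  calc Nat.card (Abelianization ↥K) ≤ Nat.card (Abelianization ↥H) :=
        Nat.card_le_card_of_surjective _ hab
    _ ≤ abGrowth G k := le_abGrowth (hidx ▸ hK)

end Aux

lemma card_bounded_of_abGrowth_bounded_aux (f : ℕ → ℕ) :
    ∀ ℓ : ℕ, ∃ B : ℕ, ∀ (G : Type) [Group G] [Finite G],
      derivedSeries G ℓ = ⊥ →
      (∀ k, 1 ≤ k → abGrowth G k ≤ f k) →
      Nat.card G ≤ B := by
  intro ℓ
  induction ℓ with
  | zero =>
    refine ⟨1, fun G _ _ h _ => ?_⟩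
    rw [derivedSeries_zero] at h
    have hs : Subsingleton G := by
      refine ⟨fun a b => ?_⟩
      have ha : a = 1 := Subgroup.mem_bot.mp (h ▸ Subgroup.mem_top a)
      have hb : b = 1 := Subgroup.mem_bot.mp (h ▸ Subgroup.mem_top b)
      rw [ha, hb]
    exact le_of_eq (Nat.card_eq_one_iff_unique.mpr ⟨hs, ⟨1⟩⟩)
  | succ ℓ ih =>
    obtain ⟨B, hB⟩ := ih
    refine ⟨max B 1 * f (max B 1), fun G _ _ hd hf => ?_⟩
    set N := derivedSeries G ℓ with hN
    haveI : N.Normal := derivedSeries_normal G ℓ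
    -- the quotient by `N` has derived length at most `ℓ`, hence bounded order
    have hq : Nat.card (G ⧸ N) ≤ B := by
      refine hB (G ⧸ N) ?_ (fun k hk => (abGrowth_quotient N k).trans (hf k hk))
      rw [← map_derivedSeries_eq (QuotientGroup.mk'_surjective N) ℓ]
      refine (Subgroup.map_eq_bot_iff _).mpr ?_
      rw [QuotientGroup.ker_mk']
    have hidx : N.index ≤ max B 1 := by
      rw [Subgroup.index_eq_card]
      exact hq.trans (le_max_left B 1)
    -- `N` is abelian
    have hcomm : commutator ↥N = ⊥ := by
      have h1 : (commutator ↥N).map N.subtype = ⁅N, N⁆ := by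
        rw [commutator_def, Subgroup.map_commutator, ← MonoidHom.range_eq_map,
          N.range_subtype]
      have h2 : (commutator ↥N).map N.subtype = ⊥ := by
        rw [h1, hN, ← derivedSeries_succ]
        exact hd
      have := (Subgroup.map_eq_bot_iff _).mp h2
      rwa [N.ker_subtype, le_bot_iff] at this
    have hcard : Nat.card ↥N = Nat.card (Abelianization ↥N) := by
      rw [card_abelianization_eq_index, hcomm, Subgroup.index_bot]
    have hNle : Nat.card ↥N ≤ f (max B 1) := by
      rw [hcard]
      exact (le_abGrowth hidx).trans (hf (max B 1) (le_max_right B 1))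
    calc Nat.card G = N.index * Nat.card ↥N := N.index_mul_card.symm
      _ ≤ max B 1 * f (max B 1) := Nat.mul_le_mul hidx hNle

/-- Finite solvable groups of bounded derived length with abelianization growth bounded
by a fixed function `f` have bounded order. -/
theorem card_bounded_of_abGrowth_bounded (f : ℕ → ℕ) (ℓ : ℕ) (hℓ : 1 ≤ ℓ) :
    ∃ B : ℕ, ∀ (G : Type) [Group G] [Finite G],
      derivedSeries G ℓ = ⊥ →
      (∀ k, 1 ≤ k → abGrowth G k ≤ f k) →
      Nat.card G ≤ B :=
  card_bounded_of_abGrowth_bounded_aux f ℓ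
end

section
/- Let $G$ be a group acting on a set $\Omega$, and suppose there exists a $G$-invariant finitely additive probability measure on all subsets of $\Omega$. Then for every finite subset $S \subseteq G$ and every $\varepsilon > 0$ there exists a nonempty finite subset $X \subseteq \Omega$ with $|XS \setminus X| < \varepsilon |X|$, provided $\Omega$ is infinite or, more generally, assuming the Følner characterization of amenable actions. -/
open Pointwise

/-- A `G`-invariant mean on `Ω`: a finitely additive probability measure on all subsets
of `Ω` which is invariant under the `G`-action. -/
def IsInvariantMean (G Ω : Type*) [Group G] [MulAction G Ω] (m : Set Ω → ℝ) : Prop :=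
  m Set.univ = 1 ∧ (∀ A : Set Ω, 0 ≤ m A) ∧
    (∀ A B : Set Ω, Disjoint A B → m (A ∪ B) = m A + m B) ∧
    (∀ (g : G) (A : Set Ω), m (g • A) = m A)

/-- Finite additivity over a `Finset`-indexed pairwise disjoint family. -/
lemma mean_finset_sum {Ω : Type*} {m : Set Ω → ℝ}
    (hadd : ∀ A B : Set Ω, Disjoint A B → m (A ∪ B) = m A + m B)
    (h0 : m ∅ = 0) {α : Type*} (F : Finset α) (C : α → Set Ω)
    (hdisj : ∀ i ∈ F, ∀ j ∈ F, i ≠ j → Disjoint (C i) (C j)) :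
    m (⋃ i ∈ F, C i) = ∑ i ∈ F, m (C i) := by
  classical
  revert hdisj
  induction F using Finset.induction_on with
  | empty => intro _; simp [h0]
  | @insert a F' ha ih =>
    intro hdisj
    have hd : Disjoint (C a) (⋃ i ∈ F', C i) := by
      simp only [Set.disjoint_iUnion_right]
      intro i hi
      exact hdisj a (Finset.mem_insert_self a F') i (Finset.mem_insert_of_mem hi)
        (by rintro rfl; exact ha hi)
    rw [Finset.set_biUnion_insert, hadd _ _ hd, Finset.sum_insert ha,
      ih (fun i hi j hj hij => hdisj i (Finset.mem_insert_of_mem hi) j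
        (Finset.mem_insert_of_mem hj) hij)]

/-- Følner condition for amenable actions: if the action of `G` on `Ω` admits an
invariant mean, then for every finite `S ⊆ G` and `ε > 0` there is a nonempty finite
`X ⊆ Ω` with `|XS \ X| < ε·|X|`. -/
theorem folner_of_invariant_mean (G Ω : Type*) [Group G] [MulAction G Ω]
    (h : ∃ m : Set Ω → ℝ, IsInvariantMean G Ω m)
    (S : Set G) (hS : S.Finite) (ε : ℝ) (hε : 0 < ε) :
    ∃ X : Set Ω, X.Finite ∧ X.Nonempty ∧
      (Nat.card ↥({y | ∃ x ∈ X, ∃ s ∈ S, y = s • x} \ X) : ℝ) < ε * (Nat.card ↥X : ℝ) := by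
  classical
  obtain ⟨m, hm1, hmpos, hmadd, hminv⟩ := h
  have hm0 : m ∅ = 0 := by
    have := hmadd ∅ ∅ (by simp)
    simp at this; linarith
  have hmono : ∀ A B : Set Ω, A ⊆ B → m A ≤ m B := by
    intro A B hAB
    have hd : Disjoint A (B \ A) := Set.disjoint_sdiff_right
    have : m (A ∪ (B \ A)) = m A + m (B \ A) := hmadd _ _ hd
    rw [Set.union_diff_cancel hAB] at this
    have := hmpos (B \ A)
    linarith
  by_contra hcon
  push_neg at hcon
  set T₀ : Finset G := hS.toFinset with hT₀
  -- Finset form of the failure of the Følner condition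
  have key : ∀ X : Finset Ω, X.Nonempty → ε * X.card ≤ (((T₀ • X) \ X).card : ℝ) := by
    intro X hX
    have hXne : (X : Set Ω).Nonempty := by exact_mod_cast hX
    have hc := hcon (X : Set Ω) X.finite_toSet hXne
    have hset : {y | ∃ x ∈ (X : Set Ω), ∃ s ∈ S, y = s • x}
        = ((T₀ • X : Finset Ω) : Set Ω) := by
      ext y
      simp only [Set.mem_setOf_eq, Finset.coe_smul, Set.mem_smul, Finset.mem_coe]
      constructor
      · rintro ⟨x, hx, s, hs, rfl⟩
        exact ⟨s, by simpa [hT₀] using hs, x, hx, rfl⟩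
      · rintro ⟨s, hs, x, hx, rfl⟩
        exact ⟨x, hx, s, by simpa [hT₀] using hs, rfl⟩
    rw [hset, ← Finset.coe_sdiff] at hc
    simp only [Nat.card_coe_set_eq, Set.ncard_coe_finset] at hc
    exact hc
  set T₁ : Finset G := insert (1 : G) T₀ with hT₁
  have hT₁ne : T₁.Nonempty := ⟨1, Finset.mem_insert_self _ _⟩
  -- one-step growth
  have hstep : ∀ X : Finset Ω, X.Nonempty → (1 + ε) * X.card ≤ ((T₁ • X).card : ℝ) := by
    intro X hX
    have hsub : (T₀ • X) ∪ X ⊆ T₁ • X := by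
      intro y hy
      rcases Finset.mem_union.mp hy with hy | hy
      · obtain ⟨t, ht, x, hx, rfl⟩ := Finset.mem_smul.mp hy
        exact Finset.mem_smul.mpr ⟨t, Finset.mem_insert_of_mem ht, x, hx, rfl⟩
      · exact Finset.mem_smul.mpr ⟨1, Finset.mem_insert_self _ _, y, hy, one_smul _ _⟩
    have hcard : ((T₀ • X) \ X).card + X.card = ((T₀ • X) ∪ X).card :=
      Finset.card_sdiff_add_card _ _
    have h1 : ((T₀ • X) ∪ X).card ≤ (T₁ • X).card := Finset.card_le_card hsub
    have h2 := key X hX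
    have : (((T₀ • X) \ X).card : ℝ) + (X.card : ℝ) ≤ ((T₁ • X).card : ℝ) := by
      exact_mod_cast hcard ▸ h1
    linarith
  -- iterated growth
  have hpow : ∀ n : ℕ, ∀ X : Finset Ω, X.Nonempty →
      (1 + ε) ^ n * X.card ≤ (((T₁ ^ n) • X).card : ℝ) := by
    intro n
    induction n with
    | zero => intro X hX; simp
    | succ n ih =>
      intro X hX
      have hne : ((T₁ ^ n) • X).Nonempty := by
        have h1 : (1 : G) ∈ T₁ ^ n := Finset.one_mem_pow (Finset.mem_insert_self _ _)
        exact Finset.Nonempty.smul ⟨1, h1⟩ hX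
      have heq : (T₁ ^ (n + 1)) • X = T₁ • ((T₁ ^ n) • X) := by
        rw [pow_succ', mul_smul]
      have hc : (0:ℝ) ≤ (1 + ε) := by linarith
      calc (1 + ε) ^ (n + 1) * X.card = (1 + ε) * ((1 + ε) ^ n * X.card) := by ring
        _ ≤ (1 + ε) * (((T₁ ^ n) • X).card : ℝ) :=
            mul_le_mul_of_nonneg_left (ih X hX) hc
        _ ≤ ((T₁ • ((T₁ ^ n) • X)).card : ℝ) := hstep _ hne
        _ = (((T₁ ^ (n + 1)) • X).card : ℝ) := by rw [heq]
  obtain ⟨n, hn⟩ := pow_unbounded_of_one_lt (2 : ℝ) (show (1:ℝ) < 1 + ε by linarith)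
  set T : Finset G := T₁ ^ n with hT
  -- doubling
  have hdouble : ∀ X : Finset Ω, 2 * X.card ≤ (T • X).card := by
    intro X
    rcases X.eq_empty_or_nonempty with rfl | hX
    · simp
    · have h1 := hpow n X hX
      have h2 : (2 : ℝ) * X.card ≤ (1 + ε) ^ n * X.card :=
        mul_le_mul_of_nonneg_right (le_of_lt hn) (by positivity)
      have : (2 : ℝ) * X.card ≤ ((T • X).card : ℝ) := by linarith
      exact_mod_cast this
  -- Hall's condition
  have hall : ∀ I : Finset (Ω × Bool),
      I.card ≤ (I.biUnion (fun p => T • ({p.1} : Finset Ω))).card := by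
    intro I
    set X : Finset Ω := I.image Prod.fst with hX
    have h1 : I ⊆ X ×ˢ (Finset.univ : Finset Bool) := by
      intro p hp
      rw [Finset.mem_product]
      exact ⟨Finset.mem_image_of_mem Prod.fst hp, Finset.mem_univ _⟩
    have h2 : I.card ≤ 2 * X.card := by
      calc I.card ≤ (X ×ˢ (Finset.univ : Finset Bool)).card := Finset.card_le_card h1
        _ = X.card * 2 := by rw [Finset.card_product]; simp
        _ = 2 * X.card := by ring
    have h3 : I.biUnion (fun p => T • ({p.1} : Finset Ω)) = T • X := by
      ext y
      simp only [Finset.mem_biUnion, Finset.mem_smul, Finset.mem_singleton,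
        Finset.mem_image, hX]
      constructor
      · rintro ⟨p, hp, t, ht, x, rfl, rfl⟩
        exact ⟨t, ht, p.1, ⟨p, hp, rfl⟩, rfl⟩
      · rintro ⟨t, ht, x, ⟨p, hp, rfl⟩, rfl⟩
        exact ⟨p, hp, t, ht, p.1, rfl, rfl⟩
    rw [h3]
    exact le_trans h2 (hdouble X)
  obtain ⟨f, hfinj, hf⟩ :=
    (Finset.all_card_le_biUnion_card_iff_exists_injective
      (fun p : Ω × Bool => T • ({p.1} : Finset Ω))).mp hall
  -- choose the group element moving each point
  have hchoice : ∀ p : Ω × Bool, ∃ t, t ∈ T ∧ t • p.1 = f p := by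
    intro p
    obtain ⟨t, ht, x, hx, hxy⟩ := Finset.mem_smul.mp (hf p)
    rw [Finset.mem_singleton] at hx
    exact ⟨t, ht, by rw [← hx]; exact hxy⟩
  choose g hgT hgf using hchoice
  -- the partition classes
  set A : G × Bool → Set Ω := fun q => {x | g (x, q.2) = q.1} with hA
  -- for fixed i, the A (t, i) for t ∈ T partition Ω
  have hApart : ∀ i : Bool, (⋃ t ∈ T, A (t, i)) = Set.univ := by
    intro i
    ext x
    simp only [Set.mem_iUnion, Set.mem_univ, iff_true, hA, Set.mem_setOf_eq]
    exact ⟨g (x, i), hgT (x, i), rfl⟩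
  have hAdisj : ∀ i : Bool, ∀ t ∈ T, ∀ t' ∈ T, t ≠ t' → Disjoint (A (t, i)) (A (t', i)) := by
    intro i t _ t' _ htt'
    rw [Set.disjoint_left]
    rintro x hx hx'
    exact htt' (hx.symm.trans hx')
  have hAsum : ∀ i : Bool, ∑ t ∈ T, m (A (t, i)) = 1 := by
    intro i
    have := mean_finset_sum hmadd hm0 T (fun t => A (t, i))
      (fun t ht t' ht' h => hAdisj i t ht t' ht' h)
    rw [hApart i, hm1] at this
    exact this.symm
  -- translated classes are pairwise disjoint over T ×ˢ univ
  have hBdisj : ∀ q ∈ T ×ˢ (Finset.univ : Finset Bool),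
      ∀ q' ∈ T ×ˢ (Finset.univ : Finset Bool), q ≠ q' →
      Disjoint (q.1 • A q) (q'.1 • A q') := by
    intro q _ q' _ hqq'
    rw [Set.disjoint_left]
    rintro y hy hy'
    obtain ⟨x, hx, hxy⟩ := Set.mem_smul_set.mp hy
    obtain ⟨x', hx', hx'y⟩ := Set.mem_smul_set.mp hy'
    have h1 : f (x, q.2) = y := by rw [← hxy, ← hx]; exact (hgf (x, q.2)).symm
    have h2 : f (x', q'.2) = y := by rw [← hx'y, ← hx']; exact (hgf (x', q'.2)).symm
    have h3 : (x, q.2) = (x', q'.2) := hfinj (h1.trans h2.symm)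
    have hx1 : x = x' := (Prod.ext_iff.mp h3).1
    have hi : q.2 = q'.2 := (Prod.ext_iff.mp h3).2
    apply hqq'
    have hq1 : q.1 = q'.1 := by rw [← hx, ← hx', hx1, hi]
    exact Prod.ext_iff.mpr ⟨hq1, hi⟩
  -- sum of measures of translated classes
  have hBsum := mean_finset_sum hmadd hm0 (T ×ˢ (Finset.univ : Finset Bool))
    (fun q => q.1 • A q) hBdisj
  have hle : m (⋃ q ∈ T ×ˢ (Finset.univ : Finset Bool), q.1 • A q) ≤ 1 := by
    rw [← hm1]
    exact hmono _ _ (Set.subset_univ _)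
  have hsum2 : ∑ q ∈ T ×ˢ (Finset.univ : Finset Bool), m (q.1 • A q) = 2 := by
    have heq : ∀ q : G × Bool, m (q.1 • A q) = m (A q) := fun q => hminv q.1 (A q)
    calc ∑ q ∈ T ×ˢ (Finset.univ : Finset Bool), m (q.1 • A q)
        = ∑ q ∈ T ×ˢ (Finset.univ : Finset Bool), m (A q) := Finset.sum_congr rfl (fun q _ => heq q)
      _ = ∑ t ∈ T, ∑ i : Bool, m (A (t, i)) := by rw [Finset.sum_product]
      _ = ∑ i : Bool, ∑ t ∈ T, m (A (t, i)) := Finset.sum_comm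
      _ = ∑ i : Bool, (1 : ℝ) := by
          exact Finset.sum_congr rfl (fun i _ => hAsum i)
      _ = 2 := by simp
  rw [hBsum, hsum2] at hle
  linarith
end

section
/- Let $G$ be an infinite amenable group acting on finite sets $(\Omega_n)_{n \ge 1}$ with $|\Omega_n| \to \infty$, and fix a finite symmetric set $S \subseteq G$. Then $\liminf_{n\to\infty} h_{ver}(\mathrm{Sch}(G \circlearrowright \Omega_n, S)) = 0$; in particular the Schreier graphs $(\mathrm{Sch}(G \circlearrowright \Omega_n, S))_{n\ge 1}$ are not a sequence of expanders. -/
open Pointwise Filter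

/-- The vertex isoperimetric number of the Schreier graph `Sch(G ↷ Ω, S)`:
the infimum of `|XS \ X| / |X|` over nonempty `X ⊆ Ω` with `|X| ≤ |Ω|/2`. -/
noncomputable def schreierIso (G : Type*) (Ω : Type*) [Group G] [MulAction G Ω]
    [Finite Ω] (S : Set G) : ℝ :=
  sInf {r | ∃ X : Set Ω, X.Nonempty ∧ 2 * Nat.card ↥X ≤ Nat.card Ω ∧
    r = (Nat.card ↥({y | ∃ x ∈ X, ∃ s ∈ S, y = s • x} \ X) : ℝ) / (Nat.card ↥X : ℝ)}

section Mean

variable {G : Type*} [Group G] {m : Set G → ℝ}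

lemma mean_empty (hm : IsInvariantMean G G m) : m ∅ = 0 := by
  have h := hm.2.2.1 ∅ ∅ (disjoint_bot_left)
  simp only [Set.union_empty] at h
  linarith

lemma mean_mono (hm : IsInvariantMean G G m) {A B : Set G} (h : A ⊆ B) : m A ≤ m B := by
  have hd : Disjoint A (B \ A) := Set.disjoint_sdiff_right
  have hu : A ∪ (B \ A) = B := Set.union_diff_cancel h
  have := hm.2.2.1 A (B \ A) hd
  rw [hu] at this
  have := hm.2.1 (B \ A)
  linarith

lemma mean_sum (hm : IsInvariantMean G G m) {ι : Type*} (t : Finset ι) (A : ι → Set G)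
    (hd : ∀ i ∈ t, ∀ j ∈ t, i ≠ j → Disjoint (A i) (A j)) :
    m (⋃ i ∈ t, A i) = ∑ i ∈ t, m (A i) := by
  classical
  induction t using Finset.induction_on with
  | empty => simpa using mean_empty hm
  | @insert a s ha ih =>
    rw [Finset.set_biUnion_insert, Finset.sum_insert ha, ← ih (fun i hi j hj hij =>
      hd i (Finset.mem_insert_of_mem hi) j (Finset.mem_insert_of_mem hj) hij)]
    apply hm.2.2.1
    rw [Set.disjoint_left]
    rintro x hxa hxs
    rw [Set.mem_iUnion₂] at hxs
    obtain ⟨i, hi, hxi⟩ := hxs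
    have hne : a ≠ i := by rintro rfl; exact ha hi
    exact Set.disjoint_left.mp
      (hd a (Finset.mem_insert_self a s) i (Finset.mem_insert_of_mem hi) hne) hxa hxi

/-- Følner-type consequence of the existence of an invariant mean, obtained via
Hall's marriage theorem (Tarski's alternative, the classical route avoiding
functional analysis). -/
lemma folner_of_mean [DecidableEq G] (hm : IsInvariantMean G G m) (S : Finset G)
    {ε : ℝ} (hε : 0 < ε) :
    ∃ F : Finset G, F.Nonempty ∧ ∑ s ∈ S, (((s • F) \ F).card : ℝ) ≤ ε * F.card := by
  by_contra hcon
  push_neg at hcon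
  have h : ∀ F : Finset G, F.Nonempty → ε * F.card < ∑ s ∈ S, (((s • F) \ F).card : ℝ) := by
    intro F hF
    exact hcon F hF
  -- S is nonempty
  have hSne : S.Nonempty := by
    rcases S.eq_empty_or_nonempty with h' | h'
    · exfalso
      have := h {1} ⟨1, Finset.mem_singleton_self 1⟩
      rw [h'] at this
      simp at this
      linarith
    · exact h'
  have hScard : (0 : ℝ) < S.card := by
    exact_mod_cast Finset.card_pos.mpr hSne
  set δ : ℝ := ε / S.card with hδdef
  have hδ : 0 < δ := div_pos hε hScard
  set S₁ : Finset G := insert (1 : G) S with hS₁def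
  have hone : (1 : G) ∈ S₁ := Finset.mem_insert_self _ _
  have hsubset : ∀ F : Finset G, F ⊆ S₁ * F := by
    intro F x hx
    exact Finset.mem_mul.mpr ⟨1, hone, x, hx, one_mul x⟩
  -- single step growth
  have step : ∀ F : Finset G, F.Nonempty → (1 + δ) * F.card ≤ ((S₁ * F).card : ℝ) := by
    intro F hF
    obtain ⟨s, hs, hlt⟩ : ∃ s ∈ S, δ * F.card < (((s • F) \ F).card : ℝ) := by
      by_contra hc
      push_neg at hc
      have hsum : ∑ s ∈ S, (((s • F) \ F).card : ℝ) ≤ ∑ _s ∈ S, δ * F.card :=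
        Finset.sum_le_sum (fun s hs => hc s hs)
      rw [Finset.sum_const, nsmul_eq_mul] at hsum
      have heq : (S.card : ℝ) * (δ * F.card) = ε * F.card := by
        rw [hδdef]
        field_simp
      have := h F hF
      linarith
    have hsub : F ∪ ((s • F) \ F) ⊆ S₁ * F := by
      apply Finset.union_subset (hsubset F)
      intro x hx
      obtain ⟨g, hg, rfl⟩ := Finset.mem_smul_finset.mp (Finset.mem_sdiff.mp hx).1
      exact Finset.mem_mul.mpr ⟨s, Finset.mem_insert_of_mem hs, g, hg, rfl⟩
    have hdisj : Disjoint F ((s • F) \ F) := Finset.disjoint_sdiff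
    have hcard : F.card + ((s • F) \ F).card ≤ (S₁ * F).card := by
      rw [← Finset.card_union_of_disjoint hdisj]
      exact Finset.card_le_card hsub
    have hcard' : (F.card : ℝ) + (((s • F) \ F).card : ℝ) ≤ ((S₁ * F).card : ℝ) := by
      exact_mod_cast hcard
    nlinarith
  -- iterated growth
  have growth : ∀ j : ℕ, ∀ F : Finset G, F.Nonempty →
      (1 + δ) ^ j * F.card ≤ (((S₁ ^ j) * F).card : ℝ) := by
    intro j
    induction j with
    | zero => intro F hF; simp
    | succ j ih =>
      intro F hF
      have hne : (S₁ * F).Nonempty := hF.mono (hsubset F)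
      have h1 : (1 + δ) ^ j * ((S₁ * F).card : ℝ) ≤ (((S₁ ^ j) * (S₁ * F)).card : ℝ) :=
        ih (S₁ * F) hne
      have h2 : (1 + δ) * (F.card : ℝ) ≤ ((S₁ * F).card : ℝ) := step F hF
      have hpow : (0 : ℝ) ≤ (1 + δ) ^ j := by positivity
      calc (1 + δ) ^ (j + 1) * F.card = (1 + δ) ^ j * ((1 + δ) * F.card) := by ring
        _ ≤ (1 + δ) ^ j * ((S₁ * F).card : ℝ) := by
            apply mul_le_mul_of_nonneg_left h2 hpow
        _ ≤ (((S₁ ^ j) * (S₁ * F)).card : ℝ) := h1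
        _ = (((S₁ ^ (j + 1)) * F).card : ℝ) := by rw [pow_succ, mul_assoc]
  obtain ⟨k, hk⟩ : ∃ k : ℕ, (2 : ℝ) < (1 + δ) ^ k :=
    pow_unbounded_of_one_lt 2 (by linarith)
  set K : Finset G := S₁ ^ k with hKdef
  have hK : ∀ A : Finset G, 2 * A.card ≤ (K * A).card := by
    intro A
    rcases A.eq_empty_or_nonempty with rfl | hA
    · simp
    · have h1 := growth k A hA
      have h2 : (2 : ℝ) * A.card ≤ (1 + δ) ^ k * A.card := by
        apply mul_le_mul_of_nonneg_right (le_of_lt hk) (by positivity)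
      have : (2 : ℝ) * A.card ≤ ((K * A).card : ℝ) := le_trans h2 h1
      exact_mod_cast this
  -- Hall's condition for a 2-to-1 matching
  have hall : ∀ s : Finset (G × Bool), s.card ≤ (s.biUnion (fun p => K * {p.1})).card := by
    intro s
    set A : Finset G := s.image Prod.fst with hAdef
    have h1 : s.biUnion (fun p => K * {p.1}) = K * A := by
      ext y
      simp only [Finset.mem_biUnion, Finset.mem_mul, Finset.mem_singleton, hAdef,
        Finset.mem_image]
      constructor
      · rintro ⟨p, hp, kk, hkk, z, rfl, hzy⟩
        exact ⟨kk, hkk, p.1, ⟨p, hp, rfl⟩, hzy⟩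
      · rintro ⟨kk, hkk, g, ⟨p, hp, rfl⟩, hzy⟩
        exact ⟨p, hp, kk, hkk, p.1, rfl, hzy⟩
    have h2 : s.card ≤ 2 * A.card := by
      have hsub : s ⊆ A ×ˢ (Finset.univ : Finset Bool) := by
        intro p hp
        exact Finset.mem_product.mpr ⟨Finset.mem_image_of_mem _ hp, Finset.mem_univ _⟩
      calc s.card ≤ (A ×ˢ (Finset.univ : Finset Bool)).card := Finset.card_le_card hsub
        _ = A.card * 2 := by rw [Finset.card_product]; simp
        _ = 2 * A.card := mul_comm _ _
    rw [h1]
    exact le_trans h2 (hK A)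
  obtain ⟨fm, hinj, hfm⟩ :=
    (Finset.all_card_le_biUnion_card_iff_exists_injective (fun p : G × Bool => K * {p.1})).mp hall
  -- the "piece" function: fm p = κf p * p.1 with κf p ∈ K
  set κf : G × Bool → G := fun p => fm p * p.1⁻¹ with hκfdef
  have hκf : ∀ p, κf p ∈ K := by
    intro p
    obtain ⟨kk, hkk, z, hz, hzy⟩ := Finset.mem_mul.mp (hfm p)
    rw [Finset.mem_singleton] at hz
    subst hz
    have : κf p = kk := by rw [hκfdef]; simp [← hzy]
    rwa [this]
  have hfmeq : ∀ p, fm p = κf p * p.1 := by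
    intro p; rw [hκfdef]; group
  set Aset : G → Bool → Set G := fun kk b => {g : G | κf (g, b) = kk} with hAsetdef
  -- the pieces partition G
  have hpart : ∀ b, ∑ kk ∈ K, m (Aset kk b) = 1 := by
    intro b
    rw [← mean_sum hm K (fun kk => Aset kk b) (by
      intro i _ j _ hij
      rw [Set.disjoint_left]
      rintro g hgi hgj
      exact hij (hgi.symm.trans hgj))]
    have huniv : (⋃ kk ∈ K, Aset kk b) = Set.univ := by
      ext g
      simp only [Set.mem_iUnion, Set.mem_univ, iff_true]
      exact ⟨κf (g, b), hκf (g, b), rfl⟩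
    rw [huniv, hm.1]
  -- translated pieces are pairwise disjoint
  have hdisjB : ∀ p ∈ K ×ˢ (Finset.univ : Finset Bool), ∀ q ∈ K ×ˢ (Finset.univ : Finset Bool),
      p ≠ q → Disjoint (p.1 • Aset p.1 p.2) (q.1 • Aset q.1 q.2) := by
    intro p _ q _ hpq
    rw [Set.disjoint_left]
    rintro x hxp hxq
    obtain ⟨g, hg, rfl⟩ := hxp
    obtain ⟨g', hg', hgg'⟩ := hxq
    have hgg2 : q.1 • g' = p.1 • g := hgg'
    have hxp' : p.1 • g = fm (g, p.2) := by
      rw [hfmeq (g, p.2)]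
      simp only [hAsetdef, Set.mem_setOf_eq] at hg
      rw [hg]
      rfl
    have hxq' : q.1 • g' = fm (g', q.2) := by
      rw [hfmeq (g', q.2)]
      simp only [hAsetdef, Set.mem_setOf_eq] at hg'
      rw [hg']
      rfl
    have heq : fm (g', q.2) = fm (g, p.2) := by rw [← hxp', ← hxq', hgg2]
    have hpair := hinj heq
    rw [Prod.mk.injEq] at hpair
    obtain ⟨hgeq, hbeq⟩ := hpair
    apply hpq
    have hk1 : p.1 = q.1 := by
      simp only [hAsetdef, Set.mem_setOf_eq] at hg hg'
      rw [← hg, ← hg', hgeq, hbeq]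
    exact Prod.ext hk1 hbeq.symm
  -- sum of measures of translated pieces is at most 1
  have hle1 : ∑ p ∈ K ×ˢ (Finset.univ : Finset Bool), m (p.1 • Aset p.1 p.2) ≤ 1 := by
    rw [← mean_sum hm _ _ hdisjB]
    have := mean_mono hm (Set.subset_univ (⋃ p ∈ K ×ˢ (Finset.univ : Finset Bool),
      p.1 • Aset p.1 p.2))
    rwa [hm.1] at this
  -- but it equals 2
  have heq2 : ∑ p ∈ K ×ˢ (Finset.univ : Finset Bool), m (p.1 • Aset p.1 p.2) = 2 := by
    rw [Finset.sum_product]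
    have : ∀ kk ∈ K, ∑ b ∈ (Finset.univ : Finset Bool), m (kk • Aset kk b)
        = ∑ b ∈ (Finset.univ : Finset Bool), m (Aset kk b) := by
      intro kk _
      exact Finset.sum_congr rfl (fun b _ => hm.2.2.2 kk (Aset kk b))
    rw [Finset.sum_congr rfl this, Finset.sum_comm]
    have : ∀ b ∈ (Finset.univ : Finset Bool), ∑ kk ∈ K, m (Aset kk b) = 1 :=
      fun b _ => hpart b
    rw [Finset.sum_congr rfl this]
    simp
  linarith

end Mean

section Transfer

variable {G Ω : Type*} [Group G] [DecidableEq G] [MulAction G Ω] [Fintype Ω] [DecidableEq Ω]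

/-- Transfer of a Følner set to a finite `G`-set of size at least `2|F|`. -/
lemma folner_transfer (S : Finset G) {F : Finset G} (hF : F.Nonempty) (ω : Ω) {ε : ℝ}
    (hfol : ∑ s ∈ S, (((s • F) \ F).card : ℝ) ≤ ε * F.card)
    (hsize : 2 * F.card ≤ Fintype.card Ω) :
    ∃ X : Finset Ω, X.Nonempty ∧ 2 * X.card ≤ Fintype.card Ω ∧
      ∑ s ∈ S, (((X.image (s • ·)) \ X).card : ℝ) ≤ ε * X.card := by
  set φ : Ω → ℕ := fun x => (F.filter (fun g => g • ω = x)).card with hφdef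
  set M : ℕ := F.card with hMdef
  have hφub : ∀ x, φ x ≤ M := fun x => Finset.card_filter_le _ _
  set T : Finset ℕ := Finset.Icc 1 M with hTdef
  set X : ℕ → Finset Ω := fun t => Finset.univ.filter (fun x => t ≤ φ x) with hXdef
  -- total mass identity
  have hfiber : ∑ x ∈ (Finset.univ : Finset Ω), φ x = F.card :=
    (Finset.card_eq_sum_card_fiberwise (fun g _ => Finset.mem_univ (g • ω))).symm
  have sumX : ∑ t ∈ T, (X t).card = F.card := by
    have h1 : ∀ t, (X t).card = ∑ x ∈ (Finset.univ : Finset Ω), if t ≤ φ x then 1 else 0 :=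
      fun t => Finset.card_filter _ _
    rw [Finset.sum_congr rfl (fun t _ => h1 t), Finset.sum_comm]
    rw [← hfiber]
    apply Finset.sum_congr rfl
    intro x _
    rw [← Finset.card_filter]
    have : T.filter (fun t => t ≤ φ x) = Finset.Icc 1 (φ x) := by
      ext t
      simp only [hTdef, Finset.mem_filter, Finset.mem_Icc]
      have := hφub x
      omega
    rw [this, Nat.card_Icc]
    omega
  -- per-generator coarea bound
  have coarea : ∀ s ∈ S, ∑ t ∈ T, (((X t).image (s • ·)) \ X t).card ≤ ((s • F) \ F).card := by
    intro s _
    set φ' : Ω → ℕ := fun y => ((s • F).filter (fun h => h • ω = y)).card with hφ'def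
    have hφ'ub : ∀ y, φ' y ≤ M := by
      intro y
      calc φ' y ≤ (s • F).card := Finset.card_filter_le _ _
        _ = F.card := Finset.card_smul_finset s F
    have lemB : ∀ y, φ (s⁻¹ • y) = φ' y := by
      intro y
      show (F.filter (fun g => g • ω = s⁻¹ • y)).card = ((s • F).filter (fun h => h • ω = y)).card
      have himg : (F.filter (fun g => g • ω = s⁻¹ • y)).image (fun g => s • g)
          = (s • F).filter (fun h => h • ω = y) := by
        ext h
        simp only [Finset.mem_image, Finset.mem_filter, Finset.mem_smul_finset]
        constructor
        · rintro ⟨g, ⟨hgF, hgω⟩, rfl⟩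
          refine ⟨⟨g, hgF, rfl⟩, ?_⟩
          rw [smul_eq_mul, mul_smul, hgω, smul_inv_smul]
        · rintro ⟨⟨g, hgF, rfl⟩, hω⟩
          refine ⟨g, ⟨hgF, ?_⟩, rfl⟩
          rw [smul_eq_mul, mul_smul] at hω
          rw [← hω, inv_smul_smul]
      rw [← himg, Finset.card_image_of_injective _ (MulAction.injective s)]
    have lemA : ∀ t, ((X t).image (s • ·)) = Finset.univ.filter (fun y => t ≤ φ' y) := by
      intro t
      ext y
      simp only [Finset.mem_image, hXdef, Finset.mem_filter, Finset.mem_univ, true_and]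
      constructor
      · rintro ⟨x, hx, rfl⟩
        rwa [← lemB, inv_smul_smul]
      · intro hy
        exact ⟨s⁻¹ • y, by rwa [lemB], smul_inv_smul s y⟩
    have lemC : ∀ t, (((X t).image (s • ·)) \ X t).card
        = (Finset.univ.filter (fun y => φ y < t ∧ t ≤ φ' y)).card := by
      intro t
      rw [lemA t]
      congr 1
      ext y
      simp only [Finset.mem_sdiff, Finset.mem_filter, Finset.mem_univ, true_and, hXdef]
      omega
    have lemD : ∑ t ∈ T, (Finset.univ.filter (fun y => φ y < t ∧ t ≤ φ' y)).card
        = ∑ y ∈ (Finset.univ : Finset Ω), (φ' y - φ y) := by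
      have h1 : ∀ t, (Finset.univ.filter (fun y => φ y < t ∧ t ≤ φ' y)).card
          = ∑ y ∈ (Finset.univ : Finset Ω), if φ y < t ∧ t ≤ φ' y then 1 else 0 :=
        fun t => Finset.card_filter _ _
      rw [Finset.sum_congr rfl (fun t _ => h1 t), Finset.sum_comm]
      apply Finset.sum_congr rfl
      intro y _
      rw [← Finset.card_filter]
      have : T.filter (fun t => φ y < t ∧ t ≤ φ' y) = Finset.Icc (φ y + 1) (φ' y) := by
        ext t
        simp only [hTdef, Finset.mem_filter, Finset.mem_Icc]
        have := hφ'ub y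
        omega
      rw [this, Nat.card_Icc]
      omega
    have lemE : ∀ y, φ' y - φ y ≤ (((s • F) \ F).filter (fun h => h • ω = y)).card := by
      intro y
      have hsub : (s • F).filter (fun h => h • ω = y)
          ⊆ (F.filter (fun h => h • ω = y)) ∪ (((s • F) \ F).filter (fun h => h • ω = y)) := by
        intro h hh
        rw [Finset.mem_filter] at hh
        by_cases hF' : h ∈ F
        · exact Finset.mem_union_left _ (Finset.mem_filter.mpr ⟨hF', hh.2⟩)
        · exact Finset.mem_union_right _
            (Finset.mem_filter.mpr ⟨Finset.mem_sdiff.mpr ⟨hh.1, hF'⟩, hh.2⟩)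
      have := (Finset.card_le_card hsub).trans (Finset.card_union_le _ _)
      show ((s • F).filter (fun h => h • ω = y)).card - (F.filter (fun h => h • ω = y)).card
        ≤ (((s • F) \ F).filter (fun h => h • ω = y)).card
      omega
    have lemF : ∑ y ∈ (Finset.univ : Finset Ω),
        (((s • F) \ F).filter (fun h => h • ω = y)).card = ((s • F) \ F).card :=
      (Finset.card_eq_sum_card_fiberwise (fun g _ => Finset.mem_univ (g • ω))).symm
    calc ∑ t ∈ T, (((X t).image (s • ·)) \ X t).card
        = ∑ t ∈ T, (Finset.univ.filter (fun y => φ y < t ∧ t ≤ φ' y)).card :=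
          Finset.sum_congr rfl (fun t _ => lemC t)
      _ = ∑ y ∈ (Finset.univ : Finset Ω), (φ' y - φ y) := lemD
      _ ≤ ∑ y ∈ (Finset.univ : Finset Ω),
            (((s • F) \ F).filter (fun h => h • ω = y)).card :=
          Finset.sum_le_sum (fun y _ => lemE y)
      _ = ((s • F) \ F).card := lemF
  -- total boundary bound
  set bdry : ℕ → ℝ := fun t => ∑ s ∈ S, ((((X t).image (s • ·)) \ X t).card : ℝ) with hbdrydef
  have total : ∑ t ∈ T, bdry t ≤ ε * F.card := by
    rw [hbdrydef]
    rw [Finset.sum_comm]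
    calc ∑ s ∈ S, ∑ t ∈ T, ((((X t).image (s • ·)) \ X t).card : ℝ)
        ≤ ∑ s ∈ S, (((s • F) \ F).card : ℝ) := by
          apply Finset.sum_le_sum
          intro s hs
          exact_mod_cast Nat.cast_le.mpr (by exact_mod_cast coarea s hs)
      _ ≤ ε * F.card := hfol
  -- choose a good level
  have hM1 : 1 ≤ M := hF.card_pos
  have h1T : 1 ∈ T := by simp [hTdef]; omega
  have hX1ne : (X 1).Nonempty := by
    obtain ⟨g₀, hg₀⟩ := hF
    refine ⟨g₀ • ω, ?_⟩
    simp only [hXdef, Finset.mem_filter, Finset.mem_univ, true_and]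
    have hmemf : g₀ ∈ F.filter (fun g => g • ω = g₀ • ω) := Finset.mem_filter.mpr ⟨hg₀, rfl⟩
    exact Finset.card_pos.mpr ⟨g₀, hmemf⟩
  have choice : ∃ t ∈ T, (X t).Nonempty ∧ bdry t ≤ ε * (X t).card := by
    by_contra hc
    push_neg at hc
    have hεpos : 0 < ε ∨ True := Or.inr trivial
    have hall : ∀ t ∈ T, ε * (X t).card ≤ bdry t := by
      intro t ht
      rcases (X t).eq_empty_or_nonempty with he | hne
      · rw [he]
        simp only [hbdrydef, he]
        simp
      · exact le_of_lt (hc t ht hne)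
    have hstrict : ε * ((X 1).card : ℝ) < bdry 1 := hc 1 h1T hX1ne
    have hsum : ∑ t ∈ T, ε * ((X t).card : ℝ) < ∑ t ∈ T, bdry t :=
      Finset.sum_lt_sum hall ⟨1, h1T, hstrict⟩
    have : ∑ t ∈ T, ε * ((X t).card : ℝ) = ε * F.card := by
      rw [← Finset.mul_sum]
      congr 1
      exact_mod_cast congrArg (Nat.cast : ℕ → ℝ) sumX
    linarith
  obtain ⟨t, ht, hXne, hXb⟩ := choice
  refine ⟨X t, hXne, ?_, hXb⟩
  have hle : (X t).card ≤ F.card := by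
    rw [← sumX]
    exact Finset.single_le_sum (f := fun t => (X t).card) (fun _ _ => Nat.zero_le _) ht
  omega

end Transfer

/-- An infinite amenable group acting on finite sets of unbounded size, with a fixed
finite symmetric set `S`, does not produce expander Schreier graphs: the isoperimetric
numbers have `liminf` equal to `0`. -/
theorem amenable_no_expanders (G : Type*) [Group G] [Infinite G]
    (hamen : ∃ m : Set G → ℝ, IsInvariantMean G G m)
    (Ω : ℕ → Type*) [∀ n, MulAction G (Ω n)] [∀ n, Finite (Ω n)]
    (hcard : Tendsto (fun n => Nat.card (Ω n)) atTop atTop)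
    (S : Set G) (hSfin : S.Finite) (hSsym : ∀ s ∈ S, s⁻¹ ∈ S) :
    liminf (fun n => schreierIso G (Ω n) S) atTop = 0 := by
  classical
  obtain ⟨m, hm⟩ := hamen
  set f : ℕ → ℝ := fun n => schreierIso G (Ω n) S with hfdef
  have h0 : ∀ n, 0 ≤ f n := by
    intro n
    apply Real.sInf_nonneg
    rintro r ⟨X, -, -, rfl⟩
    positivity
  have key : ∀ ε : ℝ, 0 < ε → ∀ᶠ n in atTop, f n ≤ ε := by
    intro ε hε
    obtain ⟨F, hFne, hfol⟩ := folner_of_mean hm hSfin.toFinset hε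
    filter_upwards [hcard.eventually_ge_atTop (2 * F.card + 1)] with n hn
    haveI : Fintype (Ω n) := Fintype.ofFinite _
    have hΩcard : Nat.card (Ω n) = Fintype.card (Ω n) := Nat.card_eq_fintype_card
    have hne : Nonempty (Ω n) := by
      rw [← Fintype.card_pos_iff]
      omega
    obtain ⟨ω⟩ := hne
    obtain ⟨X, hXne, hX2, hXb⟩ := folner_transfer hSfin.toFinset hFne ω hfol
      (by omega : 2 * F.card ≤ Fintype.card (Ω n))
    -- the boundary set vs the finset boundary
    set Bset : Set (Ω n) := {y | ∃ x ∈ (↑X : Set (Ω n)), ∃ s ∈ S, y = s • x} \ ↑X with hBdef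
    set D : Finset (Ω n) := hSfin.toFinset.biUnion (fun s => (X.image (s • ·)) \ X) with hDdef
    have hBsub : Bset ⊆ ↑D := by
      rintro y ⟨⟨x, hx, s, hs, rfl⟩, hy⟩
      simp only [hDdef, Finset.coe_biUnion, Set.mem_iUnion, Finset.mem_coe,
        Finset.mem_sdiff, Finset.mem_image, Set.Finite.mem_toFinset]
      exact ⟨s, hs, ⟨x, hx, rfl⟩, by simpa using hy⟩
    have hXcard : Nat.card ↥(↑X : Set (Ω n)) = X.card := by
      rw [Nat.card_coe_set_eq, Set.ncard_coe_finset]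
    have hXpos : (0 : ℝ) < (Nat.card ↥(↑X : Set (Ω n)) : ℝ) := by
      rw [hXcard]
      exact_mod_cast hXne.card_pos
    have hBcard : (Nat.card ↥Bset : ℝ) ≤ ∑ s ∈ hSfin.toFinset, (((X.image (s • ·)) \ X).card : ℝ) := by
      have h1 : Nat.card ↥Bset ≤ D.card := by
        rw [Nat.card_coe_set_eq, ← Set.ncard_coe_finset D]
        exact Set.ncard_le_ncard hBsub (D.finite_toSet)
      have h2 : D.card ≤ ∑ s ∈ hSfin.toFinset, ((X.image (s • ·)) \ X).card :=
        Finset.card_biUnion_le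
      calc (Nat.card ↥Bset : ℝ) ≤ (D.card : ℝ) := by exact_mod_cast h1
        _ ≤ _ := by exact_mod_cast h2
    -- conclude
    have hmem : ((Nat.card ↥Bset : ℝ) / (Nat.card ↥(↑X : Set (Ω n)) : ℝ)) ∈
        {r | ∃ Y : Set (Ω n), Y.Nonempty ∧ 2 * Nat.card ↥Y ≤ Nat.card (Ω n) ∧
          r = (Nat.card ↥({y | ∃ x ∈ Y, ∃ s ∈ S, y = s • x} \ Y) : ℝ) / (Nat.card ↥Y : ℝ)} := by
      refine ⟨↑X, Finset.coe_nonempty.mpr hXne, ?_, rfl⟩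
      rw [hXcard, hΩcard]
      omega
    have hbdd : BddBelow {r | ∃ Y : Set (Ω n), Y.Nonempty ∧ 2 * Nat.card ↥Y ≤ Nat.card (Ω n) ∧
        r = (Nat.card ↥({y | ∃ x ∈ Y, ∃ s ∈ S, y = s • x} \ Y) : ℝ) / (Nat.card ↥Y : ℝ)} := by
      refine ⟨0, ?_⟩
      rintro r ⟨Y, -, -, rfl⟩
      positivity
    have hle : f n ≤ (Nat.card ↥Bset : ℝ) / (Nat.card ↥(↑X : Set (Ω n)) : ℝ) :=
      csInf_le hbdd hmem
    refine hle.trans ?_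
    rw [div_le_iff₀ hXpos, hXcard]
    exact hBcard.trans hXb
  have hub : ∀ᶠ n in atTop, f n ≤ 1 := key 1 one_pos
  have hbdd : IsBoundedUnder (· ≥ ·) atTop f := isBoundedUnder_of ⟨0, fun n => h0 n⟩
  have hlower : (0 : ℝ) ≤ liminf f atTop := by
    apply le_liminf_of_le
    · exact isCoboundedUnder_ge_of_eventually_le atTop hub
    · exact Eventually.of_forall h0
  have hupper : liminf f atTop ≤ 0 := by
    by_contra hc
    push_neg at hc
    have h2 := liminf_le_of_frequently_le ((key (liminf f atTop / 2) (by linarith)).frequently) hbdd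
    linarith
  linarith
end

section
/- Let $d, \ell \ge 1$ be fixed. Let $(G_n)_{n\ge 1}$ be finite solvable groups of derived length at most $\ell$, acting transitively on finite sets $(\Omega_n)_{n\ge 1}$ with $|\Omega_n| \to \infty$, and let $S_n \subseteq G_n$ be symmetric subsets with $|S_n| \le d$. Then $\liminf_{n\to\infty} h_{ver}(\mathrm{Sch}(G_n \circlearrowright \Omega_n, S_n)) = 0$; i.e., the Schreier graphs are not expanders. -/
open Filter

open Finset

lemma natBern (K m : ℕ) : (m + K) * K ^ m ≤ (K + 1) ^ (m + 1) := by
  induction m with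
  | zero => simpa using Nat.le_succ K
  | succ m ih =>
      calc (m + 1 + K) * K ^ (m + 1) = ((m + 1 + K) * K) * K ^ m := by ring
        _ ≤ ((K + 1) * (m + K)) * K ^ m := Nat.mul_le_mul_right _ (by nlinarith)
        _ = (K + 1) * ((m + K) * K ^ m) := by ring
        _ ≤ (K + 1) * (K + 1) ^ (m + 1) := Nat.mul_le_mul_left _ ih
        _ = (K + 1) ^ (m + 1 + 1) := by ring

lemma exists_exp_beats_poly (D K : ℕ) (hK : 0 < K) :
    ∃ R : ℕ, 0 < R ∧ K ^ R * (R + 1) ^ D < (K + 1) ^ R := by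
  obtain ⟨m', hm'⟩ : ∃ m', K ^ (D + 1) * (D + 2) ^ D + 1 = m' + 1 := ⟨_, rfl⟩
  set m : ℕ := m' + 1 with hmdef
  have hmbig : K ^ (D + 1) * (D + 2) ^ D < m := by omega
  have hm1 : 1 ≤ m := by omega
  refine ⟨(D + 1) * m, by positivity, ?_⟩
  have h1 : m * K ^ m' ≤ (K + 1) ^ m := by
    have := natBern K m'
    exact le_trans (Nat.mul_le_mul_right _ (by omega)) this
  have h2 : K ^ (D + 1) * ((D + 1) * m + 1) ^ D < m ^ (D + 1) := by
    have hRm : (D + 1) * m + 1 ≤ (D + 2) * m := by nlinarith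
    calc K ^ (D + 1) * ((D + 1) * m + 1) ^ D ≤ K ^ (D + 1) * ((D + 2) * m) ^ D :=
          Nat.mul_le_mul_left _ (Nat.pow_le_pow_left hRm D)
      _ = (K ^ (D + 1) * (D + 2) ^ D) * m ^ D := by rw [mul_pow]; ring
      _ < m * m ^ D := by
          exact (Nat.mul_lt_mul_right (a := m ^ D) (by positivity)).mpr hmbig
      _ = m ^ (D + 1) := by rw [pow_succ]; ring
  calc K ^ ((D + 1) * m) * ((D + 1) * m + 1) ^ D
      = K ^ ((D + 1) * m') * (K ^ (D + 1) * ((D + 1) * m + 1) ^ D) := by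
        have he : (D + 1) * m = (D + 1) * m' + (D + 1) := by rw [hmdef]; ring
        rw [he, pow_add, mul_assoc]
    _ < K ^ ((D + 1) * m') * m ^ (D + 1) :=
        mul_lt_mul_of_pos_left h2 (by positivity)
    _ = (K ^ m' * m) ^ (D + 1) := by
        rw [mul_pow, ← pow_mul]
        ring_nf
    _ ≤ ((K + 1) ^ m) ^ (D + 1) := Nat.pow_le_pow_left (by rw [mul_comm]; exact h1) _
    _ = (K + 1) ^ ((D + 1) * m) := by rw [← pow_mul]; ring_nf

lemma abelian_folner (D K : ℕ) (hK : 0 < K) :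
    ∃ B : ℕ, 0 < B ∧ ∀ (Q : Type) [CommGroup Q] [DecidableEq Q] (T : Finset Q), T.card ≤ D →
      ∃ F : Finset Q, F.Nonempty ∧ F.card ≤ B ∧
        ∀ s ∈ T, K * ((F.image (fun x => s * x)) \ F).card ≤ F.card := by
  classical
  obtain ⟨R, hR, hRlt⟩ := exists_exp_beats_poly D K hK
  refine ⟨(R + 1) ^ D, by positivity, ?_⟩
  intro Q _ _ T hT
  let Box : ℕ → Finset Q := fun r =>
    (Finset.univ : Finset (↥T → Fin (r + 1))).image (fun f => ∏ t : ↥T, (t : Q) ^ ((f t : ℕ)))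
  have hone : ∀ r, (1 : Q) ∈ Box r := by
    intro r
    refine mem_image.mpr ⟨fun _ => ⟨0, by omega⟩, mem_univ _, ?_⟩
    exact Finset.prod_eq_one fun t _ => pow_zero _
  have hcard : ∀ r, (Box r).card ≤ (r + 1) ^ D := by
    intro r
    refine le_trans card_image_le ?_
    rw [card_univ]
    rw [Fintype.card_fun]
    simp only [Fintype.card_coe, Fintype.card_fin]
    exact Nat.pow_le_pow_right (by omega) hT
  have hmono : ∀ r, Box r ⊆ Box (r + 1) := by
    intro r x hx
    obtain ⟨f, -, rfl⟩ := mem_image.mp hx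
    refine mem_image.mpr ⟨fun t => ⟨(f t : ℕ), by omega⟩, mem_univ _, ?_⟩
    exact Finset.prod_congr rfl fun t _ => rfl
  have hmul : ∀ s, s ∈ T → ∀ r, ∀ x ∈ Box r, s * x ∈ Box (r + 1) := by
    intro s hs r x hx
    obtain ⟨f, -, rfl⟩ := mem_image.mp hx
    set s₀ : ↥T := ⟨s, hs⟩
    refine mem_image.mpr ⟨fun t => ⟨(f t : ℕ) + (if t = s₀ then 1 else 0), by
      have := (f t).isLt; split <;> omega⟩, mem_univ _, ?_⟩
    have : ∀ t : ↥T, (t : Q) ^ ((f t : ℕ) + (if t = s₀ then 1 else 0)) =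
        (t : Q) ^ (f t : ℕ) * (if t = s₀ then (t : Q) else 1) := by
      intro t
      rw [pow_add]
      congr 1
      split <;> simp
    simp only [this]
    rw [Finset.prod_mul_distrib, Finset.prod_ite_eq' Finset.univ s₀ (fun t => (t : Q))]
    simp [s₀, mul_comm]
  -- growth pigeonhole
  have hgrow : ∃ r < R, K * ((Box (r + 1)).card - (Box r).card) ≤ (Box r).card := by
    by_contra hcon
    push_neg at hcon
    have key : ∀ r, r ≤ R → (K + 1) ^ r ≤ K ^ r * (Box r).card := by
      intro r hr
      induction r with
      | zero => simpa using card_pos.mpr ⟨1, hone 0⟩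
      | succ r ih =>
          have hrR : r < R := by omega
          have hlt := hcon r hrR
          have hmle : (Box r).card ≤ (Box (r + 1)).card := card_le_card (hmono r)
          obtain ⟨e, he⟩ := Nat.exists_eq_add_of_le hmle
          have hse : (Box (r + 1)).card - (Box r).card = e := by omega
          rw [hse] at hlt
          calc (K + 1) ^ (r + 1) = (K + 1) * (K + 1) ^ r := by ring
            _ ≤ (K + 1) * (K ^ r * (Box r).card) := Nat.mul_le_mul_left _ (ih (by omega))
            _ = K ^ r * ((Box r).card + K * (Box r).card) := by ring
            _ ≤ K ^ r * (K * (Box r).card + K * e) := by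
                refine Nat.mul_le_mul_left _ ?_
                omega
            _ = K ^ (r + 1) * (Box (r + 1)).card := by rw [he]; ring
    have h1 := key R le_rfl
    have h2 : K ^ R * (Box R).card ≤ K ^ R * (R + 1) ^ D :=
      Nat.mul_le_mul_left _ (hcard R)
    omega
  obtain ⟨r, hrR, hgood⟩ := hgrow
  refine ⟨Box r, ⟨1, hone r⟩, ?_, ?_⟩
  · exact le_trans (hcard r) (Nat.pow_le_pow_left (by omega) D)
  · intro s hs
    have hsub : (Box r).image (fun x => s * x) \ Box r ⊆ Box (r + 1) \ Box r := by
      intro y hy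
      rw [Finset.mem_sdiff] at hy ⊢
      obtain ⟨x, hx, rfl⟩ := mem_image.mp hy.1
      exact ⟨hmul s hs r x hx, hy.2⟩
    refine le_trans (Nat.mul_le_mul_left _ (le_trans (card_le_card hsub) ?_)) hgood
    rw [card_sdiff_of_subset (hmono r)]

lemma folner (ℓ : ℕ) : ∀ D K : ℕ, 0 < K → ∃ B : ℕ, 0 < B ∧
    ∀ (G : Type) [Group G] [DecidableEq G], derivedSeries G ℓ = ⊥ →
      ∀ T : Finset G, T.card ≤ D →
        ∃ F : Finset G, F.Nonempty ∧ F.card ≤ B ∧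
          ∀ s ∈ T, K * ((F.image (fun x => s * x)) \ F).card ≤ F.card := by
  induction ℓ with
  | zero =>
      intro D K hK
      refine ⟨1, one_pos, ?_⟩
      intro G _ _ hsolv T hT
      refine ⟨{1}, ⟨1, mem_singleton_self 1⟩, le_rfl, ?_⟩
      intro s hs
      have hs1 : s = 1 := by
        have : s ∈ (⊥ : Subgroup G) := by
          rw [← hsolv, derivedSeries_zero]
          trivial
        simpa [Subgroup.mem_bot] using this
      subst hs1
      simp
  | succ ℓ IH =>
      intro D K hK
      obtain ⟨B₁, hB₁, habel⟩ := abelian_folner D (2 * K) (by omega)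
      obtain ⟨B₂, hB₂, hIH⟩ := IH ((D + 1) * B₁) (2 * K) (by omega)
      refine ⟨B₁ * B₂, by positivity, ?_⟩
      intro G _ _ hsolv T hT
      classical
      set N : Subgroup G := commutator G with hN
      -- the commutator subgroup has derived length ≤ ℓ
      have hNsolv : derivedSeries ↥N ℓ = ⊥ := by
        have key : ∀ k, (derivedSeries ↥N k).map N.subtype ≤ derivedSeries G (k + 1) := by
          intro k
          induction k with
          | zero =>
              rw [derivedSeries_zero, ← MonoidHom.range_eq_map, N.range_subtype,
                hN, ← derivedSeries_one]
          | succ k ih =>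
              rw [derivedSeries_succ, Subgroup.map_commutator, derivedSeries_succ]
              exact Subgroup.commutator_mono ih ih
        have h := key ℓ
        rw [hsolv, le_bot_iff] at h
        exact (Subgroup.map_eq_bot_iff_of_injective _ N.subtype_injective).mp h
      set Q := Abelianization G with hQ
      set φ : G →* Q := Abelianization.of with hφ
      obtain ⟨FQ, hFQne, hFQcard, hFQfol⟩ := habel Q (T.image φ) (le_trans card_image_le hT)
      set σ : Q → G := Quotient.out with hσdef
      have hσ : ∀ q : Q, φ (σ q) = q := fun q => QuotientGroup.out_eq' q
      have hker : ∀ g : G, φ g = 1 ↔ g ∈ N := fun g => QuotientGroup.eq_one_iff g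
      have hφN : ∀ n : ↥N, φ (n : G) = 1 := fun n => (hker _).mpr n.2
      have hc : ∀ (s : G) (q : Q), (σ (φ s * q))⁻¹ * s * σ q ∈ N := by
        intro s q
        refine (hker _).mp ?_
        rw [map_mul, map_mul, map_inv, hσ, hσ]
        group
      set cmap : G → Q → ↥N := fun s q => ⟨(σ (φ s * q))⁻¹ * s * σ q, hc s q⟩ with hcmap
      set TN : Finset ↥N := ((insert (1 : G) T) ×ˢ FQ).image (fun p => cmap p.1 p.2) with hTN
      have hTNcard : TN.card ≤ (D + 1) * B₁ := by
        refine le_trans card_image_le ?_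
        rw [card_product]
        exact Nat.mul_le_mul (le_trans (card_insert_le _ _) (by omega)) hFQcard
      obtain ⟨FN, hFNne, hFNcard, hFNfol⟩ := hIH ↥N hNsolv TN hTNcard
      set F : Finset G := (FQ ×ˢ FN).image (fun p => σ p.1 * (p.2 : G)) with hF
      have hinj : Function.Injective (fun p : Q × ↥N => σ p.1 * (p.2 : G)) := by
        intro p₁ p₂ h
        simp only at h
        have h1 : p₁.1 = p₂.1 := by
          have := congrArg φ h
          rw [map_mul, map_mul, hφN, hφN, hσ, hσ] at this
          simpa using this
        have h2 : p₁.2 = p₂.2 := by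
          rw [h1] at h
          have := mul_left_cancel h
          exact Subtype.ext this
        exact Prod.ext h1 h2
      have hFcard : F.card = FQ.card * FN.card := by
        rw [hF, card_image_of_injective _ hinj, card_product]
      refine ⟨F, (hFQne.product hFNne).image _, ?_, ?_⟩
      · rw [hFcard]; exact Nat.mul_le_mul hFQcard hFNcard
      · intro s hs
        set Bad : Finset Q := FQ.filter (fun q => φ s * q ∉ FQ) with hBadDef
        have hBad : 2 * K * Bad.card ≤ FQ.card := by
          have himg : (FQ.image (fun x => φ s * x)) \ FQ = Bad.image (fun x => φ s * x) := by
            ext y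
            simp only [Finset.mem_sdiff, mem_image, hBadDef, mem_filter]
            constructor
            · rintro ⟨⟨q, hq, rfl⟩, hy⟩
              exact ⟨q, ⟨hq, hy⟩, rfl⟩
            · rintro ⟨q, ⟨hq, hny⟩, rfl⟩
              exact ⟨⟨q, hq, rfl⟩, hny⟩
          have h := hFQfol (φ s) (mem_image_of_mem φ hs)
          rwa [himg, card_image_of_injective _ (mul_right_injective (φ s))] at h
        set A : Finset G := (Bad ×ˢ FN).image (fun p => s * (σ p.1 * (p.2 : G))) with hA
        set Bset : Finset G := FQ.biUnion (fun q =>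
          ((FN.image (fun n => cmap s q * n)) \ FN).image (fun (n : ↥N) => σ (φ s * q) * (n : G)))
          with hB
        have hcmem : ∀ q ∈ FQ, cmap s q ∈ TN := by
          intro q hq
          exact mem_image.mpr ⟨(s, q), mem_product.mpr ⟨mem_insert_of_mem hs, hq⟩, rfl⟩
        have hdecomp : ∀ (q : Q) (n : ↥N), s * (σ q * (n : G)) =
            σ (φ s * q) * ((cmap s q * n : ↥N) : G) := by
          intro q n
          rw [hcmap]
          push_cast
          simp [mul_assoc]
        have hsub : (F.image (fun x => s * x)) \ F ⊆ A ∪ Bset := by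
          intro y hy
          rw [Finset.mem_sdiff] at hy
          obtain ⟨hy1, hy2⟩ := hy
          obtain ⟨x, hx, rfl⟩ := mem_image.mp hy1
          obtain ⟨p, hp, rfl⟩ := mem_image.mp hx
          obtain ⟨hpq, hpn⟩ := mem_product.mp hp
          by_cases hq2 : φ s * p.1 ∈ FQ
          · refine mem_union_right _ ?_
            refine mem_biUnion.mpr ⟨p.1, hpq, ?_⟩
            set n' : ↥N := cmap s p.1 * p.2 with hn'
            have hn'mem : n' ∉ FN := by
              intro hmem
              apply hy2
              rw [hdecomp p.1 p.2]
              exact mem_image.mpr ⟨(φ s * p.1, n'), mem_product.mpr ⟨hq2, hmem⟩, rfl⟩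
            refine mem_image.mpr ⟨n', Finset.mem_sdiff.mpr ⟨mem_image_of_mem _ hpn, hn'mem⟩, ?_⟩
            rw [hdecomp p.1 p.2]
          · refine mem_union_left _ ?_
            exact mem_image.mpr ⟨p, mem_product.mpr ⟨mem_filter.mpr ⟨hpq, hq2⟩, hpn⟩, rfl⟩
        have hAcard : 2 * K * A.card ≤ FQ.card * FN.card := by
          calc 2 * K * A.card ≤ 2 * K * (Bad.card * FN.card) := by
                refine Nat.mul_le_mul_left _ ?_
                exact le_trans card_image_le (le_of_eq (card_product _ _))
            _ = (2 * K * Bad.card) * FN.card := by ring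
            _ ≤ FQ.card * FN.card := Nat.mul_le_mul_right _ hBad
        have hBcard : 2 * K * Bset.card ≤ FQ.card * FN.card := by
          have h1 : Bset.card ≤ ∑ q ∈ FQ, ((FN.image (fun n => cmap s q * n)) \ FN).card := by
            refine le_trans card_biUnion_le ?_
            exact Finset.sum_le_sum fun q _ => card_image_le
          calc 2 * K * Bset.card ≤ 2 * K * ∑ q ∈ FQ, ((FN.image (fun n => cmap s q * n)) \ FN).card :=
                Nat.mul_le_mul_left _ h1
            _ = ∑ q ∈ FQ, 2 * K * ((FN.image (fun n => cmap s q * n)) \ FN).card := by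
                rw [Finset.mul_sum]
            _ ≤ ∑ q ∈ FQ, FN.card := Finset.sum_le_sum fun q hq => hFNfol _ (hcmem q hq)
            _ = FQ.card * FN.card := by rw [Finset.sum_const, smul_eq_mul]
        have hfinal : 2 * (K * ((F.image (fun x => s * x)) \ F).card) ≤ 2 * F.card := by
          calc 2 * (K * ((F.image (fun x => s * x)) \ F).card)
              = 2 * K * ((F.image (fun x => s * x)) \ F).card := by ring
            _ ≤ 2 * K * (A ∪ Bset).card := Nat.mul_le_mul_left _ (card_le_card hsub)
            _ ≤ 2 * K * (A.card + Bset.card) := Nat.mul_le_mul_left _ (card_union_le _ _)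
            _ = 2 * K * A.card + 2 * K * Bset.card := by ring
            _ ≤ FQ.card * FN.card + FQ.card * FN.card := Nat.add_le_add hAcard hBcard
            _ = 2 * F.card := by rw [hFcard]; ring
        exact Nat.le_of_mul_le_mul_left hfinal (by omega)

lemma transfer (G : Type) [Group G] [DecidableEq G] (Ωt : Type) [Fintype Ωt] [DecidableEq Ωt]
    [Nonempty Ωt] [MulAction G Ωt] (S : Finset G) (K : ℕ) (F : Finset G) (hFne : F.Nonempty)
    (hfol : ∀ s ∈ S, K * ((F.image (fun x => s * x)) \ F).card ≤ F.card) :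
    ∃ X : Finset Ωt, X.Nonempty ∧ X.card ≤ F.card ∧
      K * ((X.biUnion (fun x => S.image (fun s => s • x))) \ X).card ≤ S.card * X.card := by
  classical
  obtain ⟨ω₀⟩ := ‹Nonempty Ωt›
  set m : Ωt → ℕ := fun x => (F.filter (fun g => g • ω₀ = x)).card with hm
  set Nc : ℕ := F.card with hNc
  have hmsum : ∑ x : Ωt, m x = Nc :=
    (card_eq_sum_card_fiberwise (f := fun g => g • ω₀) (fun g _ => mem_univ _)).symm
  have hmle : ∀ x, m x ≤ Nc := fun x => card_filter_le _ _
  set X : ℕ → Finset Ωt := fun t => univ.filter (fun x => t ≤ m x) with hX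
  set Bd : ℕ → Finset Ωt :=
    fun t => ((X t).biUnion (fun x => S.image (fun s => s • x))) \ X t with hBd
  -- total mass of the level sets
  have hXsum : ∑ t ∈ Finset.Icc 1 Nc, (X t).card = Nc := by
    have h1 : ∀ t, (X t).card = ∑ x : Ωt, if t ≤ m x then 1 else 0 := by
      intro t
      exact card_filter _ _
    calc ∑ t ∈ Finset.Icc 1 Nc, (X t).card
        = ∑ t ∈ Finset.Icc 1 Nc, ∑ x : Ωt, if t ≤ m x then 1 else 0 := by
          exact Finset.sum_congr rfl fun t _ => h1 t
      _ = ∑ x : Ωt, ∑ t ∈ Finset.Icc 1 Nc, if t ≤ m x then 1 else 0 := Finset.sum_comm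
      _ = ∑ x : Ωt, m x := by
          refine Finset.sum_congr rfl fun x _ => ?_
          rw [← Finset.card_filter]
          have : (Finset.Icc 1 Nc).filter (fun t => t ≤ m x) = Finset.Icc 1 (m x) := by
            ext t
            simp only [mem_filter, Finset.mem_Icc]
            have := hmle x
            omega
          simp [this]
      _ = Nc := hmsum
  -- co-area bound for the boundaries
  have hBdsum : ∑ t ∈ Finset.Icc 1 Nc, (Bd t).card ≤
      ∑ s ∈ S, ∑ x : Ωt, (m x - m (s • x)) := by
    have h1 : ∀ t, (Bd t).card ≤
        ((S ×ˢ (univ : Finset Ωt)).filter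
          (fun p => t ≤ m p.2 ∧ m (p.1 • p.2) < t)).card := by
      intro t
      have hsubset : Bd t ⊆ ((S ×ˢ (univ : Finset Ωt)).filter
          (fun p => t ≤ m p.2 ∧ m (p.1 • p.2) < t)).image (fun p => p.1 • p.2) := by
        intro y hy
        rw [hBd, Finset.mem_sdiff] at hy
        obtain ⟨hy1, hy2⟩ := hy
        obtain ⟨x, hx, hy3⟩ := mem_biUnion.mp hy1
        obtain ⟨s, hsS, rfl⟩ := mem_image.mp hy3
        rw [hX, mem_filter] at hx hy2
        refine mem_image.mpr ⟨(s, x), mem_filter.mpr ⟨mem_product.mpr ⟨hsS, mem_univ _⟩, hx.2, ?_⟩, rfl⟩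
        push_neg at hy2
        exact hy2 (mem_univ _)
      exact le_trans (card_le_card hsubset) card_image_le
    calc ∑ t ∈ Finset.Icc 1 Nc, (Bd t).card
        ≤ ∑ t ∈ Finset.Icc 1 Nc, ((S ×ˢ (univ : Finset Ωt)).filter
            (fun p => t ≤ m p.2 ∧ m (p.1 • p.2) < t)).card :=
          Finset.sum_le_sum fun t _ => h1 t
      _ = ∑ t ∈ Finset.Icc 1 Nc, ∑ p ∈ S ×ˢ (univ : Finset Ωt),
            if t ≤ m p.2 ∧ m (p.1 • p.2) < t then 1 else 0 := by
          exact Finset.sum_congr rfl fun t _ => card_filter _ _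
      _ = ∑ p ∈ S ×ˢ (univ : Finset Ωt), ∑ t ∈ Finset.Icc 1 Nc,
            if t ≤ m p.2 ∧ m (p.1 • p.2) < t then 1 else 0 := Finset.sum_comm
      _ = ∑ p ∈ S ×ˢ (univ : Finset Ωt), (m p.2 - m (p.1 • p.2)) := by
          refine Finset.sum_congr rfl fun p _ => ?_
          rw [← Finset.card_filter]
          have : (Finset.Icc 1 Nc).filter (fun t => t ≤ m p.2 ∧ m (p.1 • p.2) < t) =
              Finset.Ioc (m (p.1 • p.2)) (m p.2) := by
            ext t
            simp only [mem_filter, Finset.mem_Icc, Finset.mem_Ioc]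
            have := hmle p.2
            omega
          simp [this]
      _ = ∑ s ∈ S, ∑ x : Ωt, (m x - m (s • x)) := by rw [Finset.sum_product]
  -- displacement bound
  have hdisp : ∀ s ∈ S, ∑ x : Ωt, (m x - m (s • x)) ≤
      ((F.image (fun x => s * x)) \ F).card := by
    intro s hsS
    set Fs : Finset G := F.image (fun g => s * g) with hFs
    have hfiber : ∀ x : Ωt, m x = (Fs.filter (fun g => g • ω₀ = s • x)).card := by
      intro x
      rw [hFs]
      have himg : (F.image (fun g => s * g)).filter (fun g => g • ω₀ = s • x) =
          (F.filter (fun g => g • ω₀ = x)).image (fun g => s * g) := by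
        ext g
        simp only [mem_filter, mem_image]
        constructor
        · rintro ⟨⟨g₀, hg₀, rfl⟩, hgx⟩
          refine ⟨g₀, ⟨hg₀, ?_⟩, rfl⟩
          rw [mul_smul] at hgx
          exact smul_left_cancel s hgx
        · rintro ⟨g₀, ⟨hg₀, hx⟩, rfl⟩
          exact ⟨⟨g₀, hg₀, rfl⟩, by rw [mul_smul, hx]⟩
      rw [himg, card_image_of_injective _ (mul_right_injective s)]
    have hterm : ∀ x : Ωt, m x - m (s • x) ≤
        ((Fs \ F).filter (fun g => g • ω₀ = s • x)).card := by
      intro x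
      have hsubs : Fs.filter (fun g => g • ω₀ = s • x) ⊆
          (F.filter (fun g => g • ω₀ = s • x)) ∪ ((Fs \ F).filter (fun g => g • ω₀ = s • x)) := by
        intro g hg
        rw [mem_filter] at hg
        by_cases hgF : g ∈ F
        · exact mem_union_left _ (mem_filter.mpr ⟨hgF, hg.2⟩)
        · exact mem_union_right _ (mem_filter.mpr ⟨Finset.mem_sdiff.mpr ⟨hg.1, hgF⟩, hg.2⟩)
      have h1 : (Fs.filter (fun g => g • ω₀ = s • x)).card ≤
          (F.filter (fun g => g • ω₀ = s • x)).card +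
            ((Fs \ F).filter (fun g => g • ω₀ = s • x)).card :=
        le_trans (card_le_card hsubs) (card_union_le _ _)
      rw [hfiber x]
      have : m (s • x) = (F.filter (fun g => g • ω₀ = s • x)).card := rfl
      omega
    calc ∑ x : Ωt, (m x - m (s • x))
        ≤ ∑ x : Ωt, ((Fs \ F).filter (fun g => g • ω₀ = s • x)).card :=
          Finset.sum_le_sum fun x _ => hterm x
      _ = ∑ y : Ωt, ((Fs \ F).filter (fun g => g • ω₀ = y)).card :=
          Fintype.sum_equiv (MulAction.toPerm s) _ _ (fun x => rfl)
      _ = (Fs \ F).card :=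
          (card_eq_sum_card_fiberwise (f := fun g => g • ω₀) (fun g _ => mem_univ _)).symm
  -- combine
  have hmain : ∑ t ∈ Finset.Icc 1 Nc, K * (Bd t).card ≤
      ∑ t ∈ Finset.Icc 1 Nc, S.card * (X t).card := by
    calc ∑ t ∈ Finset.Icc 1 Nc, K * (Bd t).card
        = K * ∑ t ∈ Finset.Icc 1 Nc, (Bd t).card := by rw [Finset.mul_sum]
      _ ≤ K * ∑ s ∈ S, ∑ x : Ωt, (m x - m (s • x)) := Nat.mul_le_mul_left _ hBdsum
      _ = ∑ s ∈ S, K * ∑ x : Ωt, (m x - m (s • x)) := by rw [Finset.mul_sum]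
      _ ≤ ∑ s ∈ S, F.card := by
          refine Finset.sum_le_sum fun s hsS => ?_
          exact le_trans (Nat.mul_le_mul_left _ (hdisp s hsS)) (hfol s hsS)
      _ = S.card * Nc := by rw [Finset.sum_const, smul_eq_mul, hNc]
      _ = S.card * ∑ t ∈ Finset.Icc 1 Nc, (X t).card := by rw [hXsum]
      _ = ∑ t ∈ Finset.Icc 1 Nc, S.card * (X t).card := by rw [Finset.mul_sum]
  set J : Finset ℕ := (Finset.Icc 1 Nc).filter (fun t => (X t).Nonempty) with hJ
  have hBdempty : ∀ t, ¬(X t).Nonempty → (Bd t).card = 0 := by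
    intro t ht
    rw [not_nonempty_iff_eq_empty] at ht
    simp [hBd, ht]
  have hJmain : ∑ t ∈ J, K * (Bd t).card ≤ ∑ t ∈ J, S.card * (X t).card := by
    have h1 : ∑ t ∈ J, K * (Bd t).card ≤ ∑ t ∈ Finset.Icc 1 Nc, K * (Bd t).card :=
      Finset.sum_le_sum_of_subset (filter_subset _ _)
    have h2 : ∑ t ∈ Finset.Icc 1 Nc, S.card * (X t).card = ∑ t ∈ J, S.card * (X t).card := by
      refine (Finset.sum_subset (filter_subset _ _) ?_).symm
      intro t ht htJ
      have hne : ¬(X t).Nonempty := fun h => htJ (mem_filter.mpr ⟨ht, h⟩)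
      rw [not_nonempty_iff_eq_empty] at hne
      simp [hne]
    exact le_trans h1 (le_trans hmain (le_of_eq h2))
  have hNcpos : 0 < Nc := card_pos.mpr hFne
  obtain ⟨g₀, hg₀⟩ := hFne
  have h1J : (1 : ℕ) ∈ J := by
    rw [hJ, mem_filter, Finset.mem_Icc]
    refine ⟨⟨le_rfl, hNcpos⟩, ⟨g₀ • ω₀, ?_⟩⟩
    rw [hX, mem_filter]
    refine ⟨mem_univ _, ?_⟩
    rw [hm]
    refine card_pos.mpr ⟨g₀, ?_⟩
    simp [hg₀]
  obtain ⟨t, htJ, hineq⟩ := Finset.exists_le_of_sum_le ⟨1, h1J⟩ hJmain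
  rw [hJ, mem_filter, Finset.mem_Icc] at htJ
  refine ⟨X t, htJ.2, ?_, hineq⟩
  have hX1 : X t ⊆ X 1 := by
    intro x hx
    rw [hX, mem_filter] at hx ⊢
    exact ⟨mem_univ _, le_trans htJ.1.1 hx.2⟩
  have hX1card : (X 1).card ≤ F.card := by
    have himg : X 1 ⊆ F.image (fun g => g • ω₀) := by
      intro x hx
      rw [hX, mem_filter] at hx
      obtain ⟨g, hg⟩ := card_pos.mp (lt_of_lt_of_le one_pos hx.2)
      rw [mem_filter] at hg
      exact mem_image.mpr ⟨g, hg.1, hg.2⟩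
    exact le_trans (card_le_card himg) card_image_le
  exact le_trans (card_le_card hX1) hX1card

/-- Finite solvable groups of bounded derived length acting transitively on finite sets of
unbounded size, with symmetric sets of bounded cardinality, do not produce expander
Schreier graphs. -/
theorem solvable_actions_not_expanding (d ℓ : ℕ) (hd : 1 ≤ d) (hℓ : 1 ≤ ℓ)
    (G : ℕ → Type) [∀ n, Group (G n)] [∀ n, Finite (G n)]
    (hsolv : ∀ n, derivedSeries (G n) ℓ = ⊥)
    (Ω : ℕ → Type) [∀ n, MulAction (G n) (Ω n)] [∀ n, Finite (Ω n)]
    (htrans : ∀ n, ∀ x y : Ω n, ∃ g : G n, g • x = y)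
    (hcard : Tendsto (fun n => Nat.card (Ω n)) atTop atTop)
    (S : ∀ n, Set (G n)) (hSsym : ∀ n, ∀ s ∈ S n, s⁻¹ ∈ S n)
    (hScard : ∀ n, Nat.card ↥(S n) ≤ d) (hSfin : ∀ n, (S n).Finite) :
    liminf (fun n => schreierIso (G n) (Ω n) (S n)) atTop = 0 := by
  classical
  have key : Tendsto (fun n => schreierIso (G n) (Ω n) (S n)) atTop (nhds 0) := by
    rw [Metric.tendsto_atTop]
    intro ε hε
    obtain ⟨K, hKgt⟩ := exists_nat_gt ((d : ℝ) / ε)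
    have hdpos : (0 : ℝ) < (d : ℝ) / ε := by
      apply div_pos _ hε
      exact_mod_cast hd
    have hKposR : (0 : ℝ) < (K : ℝ) := lt_trans hdpos hKgt
    have hKpos : 0 < K := by exact_mod_cast hKposR
    obtain ⟨B, hB, hfol⟩ := folner ℓ d K hKpos
    obtain ⟨N₀, hN₀⟩ := Filter.eventually_atTop.mp (Filter.tendsto_atTop.mp hcard (2 * B + 2))
    refine ⟨N₀, fun n hn => ?_⟩
    have hΩ : 2 * B + 2 ≤ Nat.card (Ω n) := hN₀ n hn
    letI : Fintype (Ω n) := Fintype.ofFinite _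
    haveI : Nonempty (Ω n) := by
      have hpos : 0 < Nat.card (Ω n) := by omega
      exact (Nat.card_pos_iff.mp hpos).1
    set S' : Finset (G n) := (hSfin n).toFinset with hS'
    have hS'card : S'.card ≤ d := by
      have h1 : S'.card = (S n).ncard := (Set.ncard_eq_toFinset_card _ _).symm
      rw [h1, ← Nat.card_coe_set_eq]
      exact hScard n
    obtain ⟨F, hFne, hFcard, hFfol⟩ := hfol (G n) (hsolv n) S' hS'card
    obtain ⟨X, hXne, hXcard, hXineq⟩ := transfer (G n) (Ω n) S' K F hFne hFfol
    have hXpos : 0 < X.card := Finset.card_pos.mpr hXne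
    set bd := (X.biUnion (fun x => S'.image (fun s => s • x))) \ X with hbd
    set r : ℝ := (bd.card : ℝ) / (X.card : ℝ) with hr
    have hbdset : {y | ∃ x ∈ (X : Set (Ω n)), ∃ s ∈ S n, y = s • x} \ (X : Set (Ω n)) =
        (bd : Set (Ω n)) := by
      ext y
      constructor
      · rintro ⟨⟨x, hx, s, hs, rfl⟩, hy⟩
        rw [Finset.mem_coe, hbd, Finset.mem_sdiff]
        exact ⟨Finset.mem_biUnion.mpr ⟨x, hx,
          Finset.mem_image.mpr ⟨s, (hSfin n).mem_toFinset.mpr hs, rfl⟩⟩, hy⟩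
      · intro hy
        rw [Finset.mem_coe, hbd, Finset.mem_sdiff] at hy
        obtain ⟨h1, h2⟩ := hy
        obtain ⟨x, hx, h3⟩ := Finset.mem_biUnion.mp h1
        obtain ⟨s, hs, rfl⟩ := Finset.mem_image.mp h3
        exact ⟨⟨x, hx, s, (hSfin n).mem_toFinset.mp hs, rfl⟩, h2⟩
    have hmem : r ∈ {r | ∃ Y : Set (Ω n), Y.Nonempty ∧ 2 * Nat.card ↥Y ≤ Nat.card (Ω n) ∧
        r = (Nat.card ↥({y | ∃ x ∈ Y, ∃ s ∈ S n, y = s • x} \ Y) : ℝ) / (Nat.card ↥Y : ℝ)} := by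
      refine ⟨(X : Set (Ω n)), Finset.coe_nonempty.mpr hXne, ?_, ?_⟩
      · rw [Nat.card_coe_set_eq, Set.ncard_coe_finset]
        have : X.card ≤ B := le_trans hXcard hFcard
        omega
      · rw [hbdset, Nat.card_coe_set_eq, Set.ncard_coe_finset,
          Nat.card_coe_set_eq, Set.ncard_coe_finset]
    have hlb : ∀ z ∈ {r : ℝ | ∃ Y : Set (Ω n), Y.Nonempty ∧
        2 * Nat.card ↥Y ≤ Nat.card (Ω n) ∧
        r = (Nat.card ↥({y | ∃ x ∈ Y, ∃ s ∈ S n, y = s • x} \ Y) : ℝ) / (Nat.card ↥Y : ℝ)},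
        0 ≤ z := by
      rintro z ⟨Y, h1, h2, rfl⟩
      positivity
    have hle : schreierIso (G n) (Ω n) (S n) ≤ r := csInf_le ⟨0, hlb⟩ hmem
    have hnonneg : 0 ≤ schreierIso (G n) (Ω n) (S n) := Real.sInf_nonneg hlb
    have hrle : r ≤ (d : ℝ) / K := by
      rw [hr, div_le_div_iff₀ (by exact_mod_cast hXpos) hKposR]
      have hnat : K * bd.card ≤ d * X.card :=
        le_trans hXineq (Nat.mul_le_mul_right _ hS'card)
      calc (bd.card : ℝ) * K = ((K * bd.card : ℕ) : ℝ) := by push_cast; ring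
        _ ≤ ((d * X.card : ℕ) : ℝ) := by exact_mod_cast hnat
        _ = (d : ℝ) * X.card := by push_cast; ring
    have hdK : (d : ℝ) / K < ε := by
      rw [div_lt_iff₀ hKposR]
      have := (div_lt_iff₀ hε).mp hKgt
      linarith
    rw [Real.dist_eq, sub_zero, abs_of_nonneg hnonneg]
    exact lt_of_le_of_lt (le_trans hle hrle) hdK
  exact key.liminf_eq
end
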